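/- For the Boussinesq Lax matrix L_B'(x₁,x₂,X₁,X₂;α) = [[α−x₁X₁, −X₁x₂, X₁],[−x₁X₂, α−x₂X₂, X₂],[−x₁(x₁X₁+x₂X₂), −x₂(x₁X₁+x₂X₂), α+x₁X₁+x₂X₂]], the characteristic polynomial is det(L_B' − ζI) = (α − ζ)³; equivalently det L_B' = α³, the sum of principal 2×2 minors equals 3α², and tr L_B' = 3α, for all x₁, x₂, X₁, X₂. -/

import Mathlib

open Matrix

/-- The Boussinesq Lax matrix (spectral-parameter-free part). -/
noncomputable def LB (α x1 x2 X1 X2 : ℂ) : Matrix (Fin 3) (Fin 3) ℂ :=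
  !![α - x1 * X1, -(X1 * x2), X1;
     -(x1 * X2), α - x2 * X2, X2;
     -(x1 * (x1 * X1 + x2 * X2)), -(x2 * (x1 * X1 + x2 * X2)), α + x1 * X1 + x2 * X2]

theorem stmt16 (α x1 x2 X1 X2 : ℂ) :
    (∀ ζ : ℂ, (LB α x1 x2 X1 X2 - ζ • (1 : Matrix (Fin 3) (Fin 3) ℂ)).det = (α - ζ) ^ 3) ∧
    (LB α x1 x2 X1 X2).det = α ^ 3 ∧
    ((LB α x1 x2 X1 X2) 0 0 * (LB α x1 x2 X1 X2) 1 1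
        - (LB α x1 x2 X1 X2) 0 1 * (LB α x1 x2 X1 X2) 1 0)
      + ((LB α x1 x2 X1 X2) 0 0 * (LB α x1 x2 X1 X2) 2 2
        - (LB α x1 x2 X1 X2) 0 2 * (LB α x1 x2 X1 X2) 2 0)
      + ((LB α x1 x2 X1 X2) 1 1 * (LB α x1 x2 X1 X2) 2 2
        - (LB α x1 x2 X1 X2) 1 2 * (LB α x1 x2 X1 X2) 2 1)
      = 3 * α ^ 2 ∧
    (LB α x1 x2 X1 X2).trace = 3 * α := by
  refine ⟨fun ζ => ?_, ?_, ?_, ?_⟩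
  · simp [LB, det_fin_three, Matrix.sub_apply, Matrix.smul_apply, one_apply]
    ring
  · simp [LB, det_fin_three]; ring
  · simp [LB]; ring
  · simp [LB, Matrix.trace_fin_three]; ring
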